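/- arXiv:2407.02450 — 2 statements merged into one kernel-verified Lean document; each statement's English description precedes it below -/
import Mathlib

section
/- Let X be a real n×T matrix with X·Xᵀ invertible, let M ∈ ℝ^T be nonzero with X·M ≠ 0, and let v = (X·Xᵀ)⁻¹·X·M be the regression vector. If u ∈ ℝⁿ with Xᵀ·u ≠ 0 attains the maximal sample correlation, i.e. ⟨Xᵀ·u, M⟩ / ‖Xᵀ·u‖₂ = ⟨Xᵀ·v, M⟩ / ‖Xᵀ·v‖₂, then u is a positive scalar multiple of v: there exists t > 0 with u = t·v. In other words, the correlation-maximizing projection direction is unique up to positive scaling. -/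
open Matrix
open scoped RealInnerProductSpace

/-- **Uniqueness of the correlation-maximizing direction up to positive scaling.**
For `X ∈ ℝ^{n×T}` with `X Xᵀ` invertible, `M ≠ 0`, `X M ≠ 0`, and the regression
vector `v = (X Xᵀ)⁻¹ X M`: if `u ∈ ℝⁿ` with `Xᵀ u ≠ 0` attains the maximal sample
correlation, i.e. `⟨Xᵀu, M⟩ / ‖Xᵀu‖₂ = ⟨Xᵀv, M⟩ / ‖Xᵀv‖₂`, then `u = t • v` for
some `t > 0`. -/
theorem correlation_maximizer_unique {n T : ℕ}
    (X : Matrix (Fin n) (Fin T) ℝ) (M : Fin T → ℝ)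
    (hX : IsUnit (X * Xᵀ)) (hM : M ≠ 0) (hXM : X *ᵥ M ≠ 0)
    (v : Fin n → ℝ) (hv : v = (X * Xᵀ)⁻¹ *ᵥ (X *ᵥ M))
    (u : Fin n → ℝ) (hu : Xᵀ *ᵥ u ≠ 0)
    (heq : (Xᵀ *ᵥ u) ⬝ᵥ M / Real.sqrt (∑ j, ((Xᵀ *ᵥ u) j) ^ 2)
        = (Xᵀ *ᵥ v) ⬝ᵥ M / Real.sqrt (∑ j, ((Xᵀ *ᵥ v) j) ^ 2)) :
    ∃ t : ℝ, 0 < t ∧ u = t • v := by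
  -- X M = (X Xᵀ) v
  have hAv : (X * Xᵀ) *ᵥ v = X *ᵥ M := by
    rw [hv, Matrix.mulVec_mulVec, Matrix.mul_nonsing_inv _ ((Matrix.isUnit_iff_isUnit_det _).mp hX),
      Matrix.one_mulVec]
  set a := Xᵀ *ᵥ u with ha
  set b := Xᵀ *ᵥ v with hb
  -- b ≠ 0
  have hbne : b ≠ 0 := by
    intro h
    apply hXM
    rw [← hAv, ← Matrix.mulVec_mulVec, ← hb, h, Matrix.mulVec_zero]
  -- key dot product identities
  have hbM : b ⬝ᵥ M = b ⬝ᵥ b := by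
    have : b ⬝ᵥ M = v ⬝ᵥ (X *ᵥ M) := by
      rw [hb, Matrix.mulVec_transpose, ← Matrix.dotProduct_mulVec]
    rw [this, ← hAv, ← Matrix.mulVec_mulVec, Matrix.dotProduct_mulVec,
      ← Matrix.mulVec_transpose, hb]
  have haM : a ⬝ᵥ M = a ⬝ᵥ b := by
    have : a ⬝ᵥ M = u ⬝ᵥ (X *ᵥ M) := by
      rw [ha, Matrix.mulVec_transpose, ← Matrix.dotProduct_mulVec]
    rw [this, ← hAv, ← Matrix.mulVec_mulVec, Matrix.dotProduct_mulVec,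
      ← Matrix.mulVec_transpose, ha, hb]
  -- move to EuclideanSpace
  set a' : EuclideanSpace ℝ (Fin T) := WithLp.toLp 2 a with ha'
  set b' : EuclideanSpace ℝ (Fin T) := WithLp.toLp 2 b with hb'
  have ha'ne : a' ≠ 0 := by
    intro h; apply hu; simpa [ha'] using congrArg WithLp.ofLp h
  have hb'ne : b' ≠ 0 := by
    intro h; apply hbne; simpa [hb'] using congrArg WithLp.ofLp h
  have hna : ‖a'‖ = Real.sqrt (∑ j, (a j) ^ 2) := by
    rw [EuclideanSpace.norm_eq]; simp [ha', Real.norm_eq_abs, sq_abs]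
  have hnb : ‖b'‖ = Real.sqrt (∑ j, (b j) ^ 2) := by
    rw [EuclideanSpace.norm_eq]; simp [hb', Real.norm_eq_abs, sq_abs]
  have hinner : (inner ℝ a' b' : ℝ) = a ⬝ᵥ b := by
    simp [ha', hb', PiLp.inner_apply, RCLike.inner_apply, dotProduct, mul_comm]
  have hbb : (inner ℝ b' b' : ℝ) = b ⬝ᵥ b := by
    rw [hb', PiLp.inner_apply]
    simp [RCLike.inner_apply, dotProduct, mul_comm, sq]
  have hnbpos : 0 < ‖b'‖ := norm_pos_iff.mpr hb'ne
  have hnapos : 0 < ‖a'‖ := norm_pos_iff.mpr ha'ne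
  -- rewrite heq
  have heq' : (inner ℝ a' b' : ℝ) / ‖a'‖ = ‖b'‖ := by
    rw [hna, hinner, ← haM]
    rw [heq, hbM, ← hbb, real_inner_self_eq_norm_sq, ← hnb]
    field_simp
  have hcs : (inner ℝ a' b' : ℝ) = ‖a'‖ * ‖b'‖ := by
    have h3 := (div_eq_iff hnapos.ne').mp heq'
    linarith [h3]
  have := inner_eq_norm_mul_iff_real.mp hcs
  -- this : ‖b'‖ • a' = ‖a'‖ • b'
  set t : ℝ := ‖a'‖ / ‖b'‖ with ht
  have htpos : 0 < t := div_pos hnapos hnbpos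
  have hab : a = t • b := by
    have h2 : a' = t • b' := by
      rw [ht, div_eq_inv_mul, mul_smul]
      rw [← this]
      rw [smul_smul, inv_mul_cancel₀ hnbpos.ne', one_smul]
    have h3 := congrArg WithLp.ofLp h2
    simpa [ha', hb'] using h3
  -- Xᵀ (u - t v) = 0 ⇒ u = t v
  have hXt : Xᵀ *ᵥ (u - t • v) = 0 := by
    rw [Matrix.mulVec_sub, Matrix.mulVec_smul]
    exact sub_eq_zero.mpr hab
  have hinj : Function.Injective ((X * Xᵀ).mulVec) :=
    Matrix.mulVec_injective_iff_isUnit.mpr hX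
  have : (X * Xᵀ) *ᵥ (u - t • v) = (X * Xᵀ) *ᵥ 0 := by
    rw [← Matrix.mulVec_mulVec, hXt, Matrix.mulVec_zero, Matrix.mulVec_zero]
  have h0 : u - t • v = 0 := hinj this
  exact ⟨t, htpos, by rwa [sub_eq_zero] at h0⟩
end

section
/- (Theorem 1, PCA–IR relation.) Let X be a real n×N matrix (N ≥ 2) with X·Xᵀ invertible, and let M ∈ ℝ^N be nonzero with X·M ≠ 0. Let v = (X·Xᵀ)⁻¹·X·M be the regression vector and v* = v/‖v‖₂ the first Iterative Regression dimension. Let p ∈ ℝⁿ be a unit eigenvector of the sample covariance matrix Σ_X = (N−1)⁻¹·X·Xᵀ with eigenvalue λ > 0 (so that X·Xᵀ·p = (N−1)·λ·p). Then the sample correlation between the principal-component projection pᵀX and M satisfies r(pᵀX, M) = ⟨Xᵀ·p, M⟩ / (‖M‖₂ ‖Xᵀ·p‖₂) = α·√λ·⟨v*, p⟩, where α = ‖v‖₂·√(N−1)/‖M‖₂; equivalently, r(pᵀX, M) = (√(λ·(N−1))/‖M‖₂)·⟨v, p⟩. -/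
open Matrix

/-- **Theorem 1 (PCA–IR relation).**
Let `X ∈ ℝ^{n×N}` (`N ≥ 2`) have `X Xᵀ` invertible, let `M ∈ ℝ^N` be nonzero with
`X M ≠ 0`, let `v = (X Xᵀ)⁻¹ X M` be the regression vector and `v* = v/‖v‖₂` the
first IR dimension. If `p` is a unit eigenvector of the sample covariance
`Σ_X = (N−1)⁻¹ X Xᵀ` with eigenvalue `λ > 0` (i.e. `X Xᵀ p = (N−1) λ p`), then
`r(pᵀX, M) = ⟨Xᵀp, M⟩/(‖M‖₂ ‖Xᵀp‖₂) = α √λ ⟨v*, p⟩` with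
`α = ‖v‖₂ √(N−1)/‖M‖₂`; equivalently `r(pᵀX, M) = (√(λ(N−1))/‖M‖₂) ⟨v, p⟩`. -/
theorem pca_ir_relation {n N : ℕ} (hN : 2 ≤ N)
    (X : Matrix (Fin n) (Fin N) ℝ) (M : Fin N → ℝ)
    (hX : IsUnit (X * Xᵀ)) (hM : M ≠ 0) (hXM : X *ᵥ M ≠ 0)
    (v : Fin n → ℝ) (hv : v = (X * Xᵀ)⁻¹ *ᵥ (X *ᵥ M))
    (vstar : Fin n → ℝ) (hvstar : vstar = (Real.sqrt (∑ i, (v i) ^ 2))⁻¹ • v)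
    (p : Fin n → ℝ) (hp : ∑ i, (p i) ^ 2 = 1)
    (lam : ℝ) (hlam : 0 < lam)
    (heig : (X * Xᵀ) *ᵥ p = (((N : ℝ) - 1) * lam) • p)
    (α : ℝ)
    (hα : α = Real.sqrt (∑ i, (v i) ^ 2) * Real.sqrt ((N : ℝ) - 1)
            / Real.sqrt (∑ j, (M j) ^ 2)) :
    (Xᵀ *ᵥ p) ⬝ᵥ M /
        (Real.sqrt (∑ j, (M j) ^ 2) * Real.sqrt (∑ j, ((Xᵀ *ᵥ p) j) ^ 2))
      = α * Real.sqrt lam * (vstar ⬝ᵥ p) ∧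
    (Xᵀ *ᵥ p) ⬝ᵥ M /
        (Real.sqrt (∑ j, (M j) ^ 2) * Real.sqrt (∑ j, ((Xᵀ *ᵥ p) j) ^ 2))
      = (Real.sqrt (lam * ((N : ℝ) - 1)) / Real.sqrt (∑ j, (M j) ^ 2))
          * (v ⬝ᵥ p) := by
  have hdet : IsUnit (X * Xᵀ).det := (Matrix.isUnit_iff_isUnit_det _).mp hX
  have hN1 : (0:ℝ) < (N:ℝ) - 1 := by
    have : (2:ℝ) ≤ (N:ℝ) := by exact_mod_cast hN
    linarith
  -- X *ᵥ M = (X * Xᵀ) *ᵥ v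
  have hXMv : X *ᵥ M = (X * Xᵀ) *ᵥ v := by
    rw [hv, Matrix.mulVec_mulVec, Matrix.mul_nonsing_inv _ hdet, Matrix.one_mulVec]
  -- v ≠ 0
  have hvne : v ≠ 0 := by
    intro h
    apply hXM
    rw [hXMv, h, Matrix.mulVec_zero]
  have hvsum : 0 < ∑ i, (v i) ^ 2 := by
    have h1 : 0 ≤ ∑ i, (v i) ^ 2 := Finset.sum_nonneg fun i _ => sq_nonneg _
    rcases h1.lt_or_eq with h | h
    · exact h
    · exfalso; apply hvne
      funext i
      have := (Finset.sum_eq_zero_iff_of_nonneg (fun i _ => sq_nonneg (v i))).mp h.symm i (Finset.mem_univ i)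
      exact pow_eq_zero_iff (by norm_num) |>.mp this
  have hMsum : 0 < ∑ j, (M j) ^ 2 := by
    have h1 : 0 ≤ ∑ j, (M j) ^ 2 := Finset.sum_nonneg fun i _ => sq_nonneg _
    rcases h1.lt_or_eq with h | h
    · exact h
    · exfalso; apply hM
      funext i
      have := (Finset.sum_eq_zero_iff_of_nonneg (fun i _ => sq_nonneg (M i))).mp h.symm i (Finset.mem_univ i)
      exact pow_eq_zero_iff (by norm_num) |>.mp this
  -- key1 : numerator
  have key1 : (Xᵀ *ᵥ p) ⬝ᵥ M = (((N : ℝ) - 1) * lam) * (v ⬝ᵥ p) := by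
    calc (Xᵀ *ᵥ p) ⬝ᵥ M = p ⬝ᵥ (X *ᵥ M) := by
          rw [Matrix.mulVec_transpose, ← Matrix.dotProduct_mulVec]
      _ = p ⬝ᵥ ((X * Xᵀ) *ᵥ v) := by rw [hXMv]
      _ = ((X * Xᵀ) *ᵥ p) ⬝ᵥ v := by
          rw [Matrix.dotProduct_mulVec, ← Matrix.mulVec_transpose,
            Matrix.transpose_mul, Matrix.transpose_transpose]
      _ = (((N : ℝ) - 1) * lam) * (p ⬝ᵥ v) := by rw [heig, smul_dotProduct]; rfl
      _ = (((N : ℝ) - 1) * lam) * (v ⬝ᵥ p) := by rw [dotProduct_comm]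
  -- key2 : norm of Xᵀ p
  have key2 : ∑ j, ((Xᵀ *ᵥ p) j) ^ 2 = ((N : ℝ) - 1) * lam := by
    have : ∑ j, ((Xᵀ *ᵥ p) j) ^ 2 = (Xᵀ *ᵥ p) ⬝ᵥ (Xᵀ *ᵥ p) := by
      simp [dotProduct, sq]
    rw [this]
    calc (Xᵀ *ᵥ p) ⬝ᵥ (Xᵀ *ᵥ p) = p ⬝ᵥ ((X * Xᵀ) *ᵥ p) := by
          rw [← Matrix.mulVec_mulVec, Matrix.dotProduct_mulVec p X,
            ← Matrix.mulVec_transpose]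
      _ = (((N : ℝ) - 1) * lam) * (p ⬝ᵥ p) := by rw [heig, dotProduct_smul]; rfl
      _ = ((N : ℝ) - 1) * lam := by
          have : p ⬝ᵥ p = 1 := by
            rw [← hp]; simp [dotProduct, sq]
          rw [this, mul_one]
  set sM := Real.sqrt (∑ j, (M j) ^ 2) with hsM
  have hsMpos : 0 < sM := Real.sqrt_pos.mpr hMsum
  set sv := Real.sqrt (∑ i, (v i) ^ 2) with hsv
  have hsvpos : 0 < sv := Real.sqrt_pos.mpr hvsum
  have hsNl : Real.sqrt (((N:ℝ) - 1) * lam) = Real.sqrt ((N:ℝ)-1) * Real.sqrt lam :=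
    Real.sqrt_mul hN1.le _
  have hNlpos : 0 < ((N:ℝ) - 1) * lam := mul_pos hN1 hlam
  have key3 : (Xᵀ *ᵥ p) ⬝ᵥ M /
        (sM * Real.sqrt (∑ j, ((Xᵀ *ᵥ p) j) ^ 2))
      = Real.sqrt (((N:ℝ)-1) * lam) / sM * (v ⬝ᵥ p) := by
    rw [key1, key2]
    have hs : Real.sqrt (((N:ℝ)-1) * lam) * Real.sqrt (((N:ℝ)-1) * lam)
        = ((N:ℝ)-1) * lam := Real.mul_self_sqrt hNlpos.le
    have hsp : 0 < Real.sqrt (((N:ℝ)-1) * lam) := Real.sqrt_pos.mpr hNlpos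
    rw [div_eq_iff (ne_of_gt (mul_pos hsMpos hsp))]
    field_simp
    have h1 : Real.sqrt ((N:ℝ)-1) * Real.sqrt ((N:ℝ)-1) = (N:ℝ)-1 :=
      Real.mul_self_sqrt hN1.le
    have h2 : Real.sqrt lam * Real.sqrt lam = lam := Real.mul_self_sqrt hlam.le
    linear_combination (-(v ⬝ᵥ p)) * hs
  constructor
  · rw [key3, hvstar, hα]
    rw [smul_dotProduct, hsNl]
    field_simp
    simp only [smul_eq_mul]
    field_simp
  · rw [key3, mul_comm lam]
end
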